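/- arXiv:2010.11990 — 9 statements merged into one kernel-verified Lean document; each statement's English description precedes it below -/
import Mathlib

section
/- For every pair (τ, v) ∈ ℝ × V, the vector (τ, v) is null for g (i.e., g((τ,v),(τ,v)) = 0) if and only if one of the following holds: (i) τ > 0 and τ = F(v); (ii) τ < 0 and −τ = F(−v); (iii) τ = 0 and v = 0. In particular, the null cone of the Lorentzian scalar product g coincides exactly with the cone determined by the Randers norm F with Zermelo data (h, W). -/
/-- For the Lorentz metric `g = Λ dt² − 2ω dt − h` associated with Zermelo
data `(h, W)` with `h(W,W) < 1`, a vector `(τ, v)` is `g`-null iff `τ > 0 ∧ τ = F v`, or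
`τ < 0 ∧ −τ = F(−v)`, or `τ = 0 ∧ v = 0`, where `F` is the Randers norm with Zermelo
data `(h, W)`. -/
theorem stmt_0 {V : Type*} [AddCommGroup V] [Module ℝ V] [FiniteDimensional ℝ V]
    (h : V →ₗ[ℝ] V →ₗ[ℝ] ℝ)
    (hsymm : ∀ x y : V, h x y = h y x)
    (hposdef : ∀ x : V, x ≠ 0 → 0 < h x x)
    (W : V) (hW : h W W < 1)
    (Λ : ℝ) (hΛ : Λ = 1 - h W W)
    (F : V → ℝ)
    (hF : ∀ v : V, F v = (-(h v W) + Real.sqrt ((h v W) ^ 2 + Λ * h v v)) / Λ)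
    (g : ℝ × V → ℝ × V → ℝ)
    (hg : ∀ (τ σ : ℝ) (v u : V),
      g (τ, v) (σ, u) = Λ * (τ * σ) + τ * h u W + σ * h v W - h v u) :
    ∀ (τ : ℝ) (v : V),
      g (τ, v) (τ, v) = 0 ↔
        (0 < τ ∧ τ = F v) ∨ (τ < 0 ∧ -τ = F (-v)) ∨ (τ = 0 ∧ v = 0) := by
  have hΛpos : 0 < Λ := by
    have h0 : 0 ≤ h W W := by
      by_cases hw : W = 0
      · simp [hw]
      · exact (hposdef W hw).le
    linarith
  have hΛne : Λ ≠ 0 := ne_of_gt hΛpos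
  intro τ v
  by_cases hv : v = 0
  · subst hv
    have hb : (h 0) W = 0 := by simp
    have ha : (h 0) (0 : V) = 0 := by simp
    have hF0 : F 0 = 0 := by
      rw [hF, hb, ha]; simp
    rw [hg, hb, ha]
    constructor
    · intro hz
      right; right
      have htt : τ * τ = 0 := by nlinarith
      exact ⟨mul_self_eq_zero.mp htt, rfl⟩
    · rintro (⟨ht, hτ⟩ | ⟨ht, hτ⟩ | ⟨ht, _⟩)
      · rw [hF0] at hτ; linarith
      · rw [neg_zero, hF0] at hτ; linarith
      · subst ht; ring
  · set a := (h v) v with ha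
    set b := (h v) W with hb
    have hapos : 0 < a := hposdef v hv
    set s := Real.sqrt (b ^ 2 + Λ * a) with hs
    have hs0 : 0 ≤ s := Real.sqrt_nonneg _
    have hsq : s ^ 2 = b ^ 2 + Λ * a := Real.sq_sqrt (by nlinarith)
    have hsb1 : b < s := by nlinarith
    have hsb2 : -s < b := by nlinarith
    have hFv : F v = (-b + s) / Λ := hF v
    have hFnv : F (-v) = (b + s) / Λ := by
      rw [hF]
      have e1 : (h (-v)) (-v) = a := by simp [ha]
      have e2 : (h (-v)) W = -b := by simp [hb]
      rw [e1, e2, neg_neg, neg_sq]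
    have key : Λ * (τ * τ) + τ * b + τ * b - a
        = Λ * (τ - (-b + s) / Λ) * (τ - (-(b + s)) / Λ) := by
      field_simp
      nlinarith [hsq]
    rw [hg, key]
    constructor
    · intro hz
      rcases mul_eq_zero.mp hz with hz1 | hz2
      · rcases mul_eq_zero.mp hz1 with hz0 | hz1'
        · exact absurd hz0 hΛne
        · left
          have hτ : τ = (-b + s) / Λ := by linarith [sub_eq_zero.mp hz1']
          refine ⟨?_, by rw [hτ, hFv]⟩
          rw [hτ]
          exact div_pos (by linarith) hΛpos
      · right; left
        have hτ : τ = (-(b + s)) / Λ := sub_eq_zero.mp hz2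
        constructor
        · rw [hτ]
          exact div_neg_of_neg_of_pos (by linarith) hΛpos
        · rw [hτ, hFnv]; field_simp
    · rintro (⟨ht, hτ⟩ | ⟨ht, hτ⟩ | ⟨ht, hv0⟩)
      · rw [hFv] at hτ
        rw [hτ]; field_simp; ring
      · rw [hFnv] at hτ
        have hτ' : τ = -((b + s) / Λ) := by linarith
        rw [hτ']; field_simp; ring
      · exact absurd hv0 hv
end

section
/- The symmetric bilinear form g on ℝ × V is nondegenerate of Lorentzian signature (1, n), where n = dim V: g((1,0),(1,0)) = Λ > 0, g is negative definite on the n-dimensional subspace {0} × V, and every subspace of ℝ × V on which g is negative definite has dimension at most n. -/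
/-- The symmetric bilinear form `g = Λ dt² − 2ω dt − h` on `ℝ × V` is
nondegenerate of Lorentzian signature `(1, n)`, `n = dim V`: `g((1,0),(1,0)) = Λ > 0`,
`g` is negative definite on `{0} × V`, and any subspace on which `g` is negative
definite has dimension at most `n`. -/
theorem stmt_1 {V : Type*} [AddCommGroup V] [Module ℝ V] [FiniteDimensional ℝ V]
    (h : V →ₗ[ℝ] V →ₗ[ℝ] ℝ)
    (hsymm : ∀ x y : V, h x y = h y x)
    (hposdef : ∀ x : V, x ≠ 0 → 0 < h x x)
    (W : V) (hW : h W W < 1)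
    (Λ : ℝ) (hΛ : Λ = 1 - h W W)
    (g : ℝ × V → ℝ × V → ℝ)
    (hg : ∀ (τ σ : ℝ) (v u : V),
      g (τ, v) (σ, u) = Λ * (τ * σ) + τ * h u W + σ * h v W - h v u) :
    (g ((1 : ℝ), (0 : V)) ((1 : ℝ), (0 : V)) = Λ ∧ 0 < Λ) ∧
    (∀ x : ℝ × V, (∀ y : ℝ × V, g x y = 0) → x = 0) ∧
    (∀ v : V, v ≠ 0 → g ((0 : ℝ), v) ((0 : ℝ), v) < 0) ∧
    (∀ S : Submodule ℝ (ℝ × V), (∀ x ∈ S, x ≠ 0 → g x x < 0) →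
      Module.finrank ℝ S ≤ Module.finrank ℝ V) := by
  have hzero : ∀ z : V, (∀ u : V, h z u = 0) → z = 0 := by
    intro z hz
    by_contra hne
    have := hposdef z hne
    rw [hz z] at this
    exact lt_irrefl 0 this
  refine ⟨⟨?_, ?_⟩, ?_, ?_, ?_⟩
  · rw [hg]; simp
  · rw [hΛ]; linarith
  · rintro ⟨τ, v⟩ hx
    have key : ∀ u : V, h (τ • W - v) u = 0 := by
      intro u
      have h0 := hx (0, u)
      rw [hg] at h0
      have : τ * h u W - h v u = 0 := by linarith
      simp only [map_sub, map_smul, LinearMap.sub_apply, LinearMap.smul_apply,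
        smul_eq_mul]
      rw [hsymm W u]
      linarith
    have hv : v = τ • W := by
      have := hzero _ key
      have : τ • W = v := by
        have h' := sub_eq_zero.mp this
        exact h'
      exact this.symm
    have h1 := hx (1, 0)
    rw [hg] at h1
    simp only [map_zero, LinearMap.zero_apply, mul_one, mul_zero] at h1
    rw [hv] at h1
    simp only [map_smul, LinearMap.smul_apply, smul_eq_mul] at h1
    have hτ : τ = 0 := by
      have : τ * (Λ + h W W) = 0 := by linarith
      rw [hΛ] at this
      have h1 : (1 : ℝ) - h W W + h W W = 1 := by ring
      rw [show Λ = 1 - h W W from hΛ] at *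
      nlinarith
    rw [hv, hτ]
    simp
  · intro v hv
    rw [hg]
    have := hposdef v hv
    nlinarith
  · intro S hS
    have htop : Module.finrank ℝ (ℝ × V) = Module.finrank ℝ V + 1 := by
      rw [Module.finrank_prod, Module.finrank_self]; ring
    have hle : Module.finrank ℝ S ≤ Module.finrank ℝ V + 1 := by
      rw [← htop]; exact Submodule.finrank_le S
    rcases lt_or_eq_of_le hle with h' | h'
    · omega
    · exfalso
      have hSeq : S = ⊤ := Submodule.eq_top_of_finrank_eq (by rw [htop, h'])
      have hmem : ((1 : ℝ), W) ∈ S := by rw [hSeq]; trivial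
      have hne : ((1 : ℝ), W) ≠ 0 := by
        intro hc
        have := congrArg Prod.fst hc
        simp at this
      have hlt := hS _ hmem hne
      rw [hg] at hlt
      nlinarith
end

section
/- For every nonzero v ∈ V one has F(v) > 0, and F(v) is the unique real number s > 0 satisfying h(v − sW, v − sW) = s². (This is the Zermelo-data characterization H(v − F(v)W) = F(v) of the Randers norm, where H := √(h(·,·)).) -/
/-- For nonzero `v`, the Randers norm `F v` with Zermelo data `(h, W)`
is positive and is the unique `s > 0` with `h(v − sW, v − sW) = s²`
(the Zermelo characterization `H(v − F(v)W) = F(v)`). -/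
theorem stmt_2 {V : Type*} [AddCommGroup V] [Module ℝ V] [FiniteDimensional ℝ V]
    (h : V →ₗ[ℝ] V →ₗ[ℝ] ℝ)
    (hsymm : ∀ x y : V, h x y = h y x)
    (hposdef : ∀ x : V, x ≠ 0 → 0 < h x x)
    (W : V) (hW : h W W < 1)
    (Λ : ℝ) (hΛ : Λ = 1 - h W W)
    (F : V → ℝ)
    (hF : ∀ v : V, F v = (-(h v W) + Real.sqrt ((h v W) ^ 2 + Λ * h v v)) / Λ) :
    ∀ v : V, v ≠ 0 →
      0 < F v ∧
      h (v - F v • W) (v - F v • W) = (F v) ^ 2 ∧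
      (∀ s : ℝ, 0 < s → h (v - s • W) (v - s • W) = s ^ 2 → s = F v) := by
  intro v hv
  have hΛpos : 0 < Λ := by
    have := hW; linarith [hΛ]
  set a := h v W with ha
  have hb : 0 < h v v := hposdef v hv
  set b := h v v with hbdef
  have hnn : 0 ≤ a ^ 2 + Λ * b := by nlinarith
  set S := Real.sqrt (a ^ 2 + Λ * b) with hSdef
  have hS0 : 0 ≤ S := Real.sqrt_nonneg _
  have hS2 : S ^ 2 = a ^ 2 + Λ * b := Real.sq_sqrt hnn
  have hSgt : |a| < S := by
    nlinarith [abs_nonneg a, sq_abs a]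
  have hFv : F v = (-a + S) / Λ := hF v
  have hFpos : 0 < F v := by
    rw [hFv]
    have : a ≤ |a| := le_abs_self a
    have : -a < S := by
      have := neg_abs_le a; linarith
    exact div_pos (by linarith) hΛpos
  -- key quadratic identity
  have hkey : Λ * (F v) ^ 2 + 2 * a * (F v) - b = 0 := by
    rw [hFv]
    field_simp
    nlinarith [hS2]
  have hexpand : ∀ s : ℝ, h (v - s • W) (v - s • W)
      = b - 2 * s * a + s ^ 2 * h W W := by
    intro s
    have hWv : h W v = a := (hsymm W v).trans rfl
    simp [map_sub, map_smul, LinearMap.sub_apply, LinearMap.smul_apply,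
      smul_eq_mul, hWv, ← ha, ← hbdef]
    ring
  refine ⟨hFpos, ?_, ?_⟩
  · rw [hexpand]
    have hw : h W W = 1 - Λ := by linarith [hΛ]
    rw [hw]; nlinarith [hkey]
  · intro s hs hseq
    rw [hexpand] at hseq
    have hw : h W W = 1 - Λ := by linarith [hΛ]
    rw [hw] at hseq
    have hq : Λ * s ^ 2 + 2 * a * s - b = 0 := by nlinarith
    -- (s - F v)(Λ(s + F v) + 2a) = 0 and second factor positive
    have hpos2 : 0 < Λ * (F v) + a := by
      rw [hFv]
      have : -a < S := by linarith [neg_abs_le a]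
      have h1 : Λ * ((-a + S) / Λ) = -a + S := by field_simp
      rw [h1]
      linarith [abs_nonneg a, hSgt]
    have hfac : (s - F v) * (Λ * (s + F v) + 2 * a) = 0 := by
      nlinarith [hq, hkey]
    have h2 : 0 < Λ * (s + F v) + 2 * a := by nlinarith
    have := mul_eq_zero.mp hfac
    rcases this with h' | h'
    · linarith
    · linarith
end

section
/- Let P ⊆ V be a linear subspace and u ∈ V a nonzero vector. Then the following are equivalent: (i) F(u) = 1 and for every w ∈ P the directional derivative (d/dδ)[F(u + δw)²] at δ = 0 vanishes (i.e., u is F-unit and F-orthogonal to P); (ii) the vector v := u − W satisfies h(v,v) = 1 and h(v,w) = 0 for all w ∈ P (i.e., v is h-unit and h-orthogonal to P). In particular, u satisfies (i) if and only if u = v + W with v h-unit and h-orthogonal to P. -/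
/-- For a subspace `P ⊆ V` and nonzero `u`, `u` is `F`-unit and
`F`-orthogonal to `P` (the directional derivative of `F²` at `u` in every direction
`w ∈ P` vanishes) iff `v := u − W` is `h`-unit and `h`-orthogonal to `P`; equivalently,
iff `u = v + W` with `v` `h`-unit and `h`-orthogonal to `P`. -/
theorem stmt_3 {V : Type*} [AddCommGroup V] [Module ℝ V] [FiniteDimensional ℝ V]
    (h : V →ₗ[ℝ] V →ₗ[ℝ] ℝ)
    (hsymm : ∀ x y : V, h x y = h y x)
    (hposdef : ∀ x : V, x ≠ 0 → 0 < h x x)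
    (W : V) (hW : h W W < 1)
    (Λ : ℝ) (hΛ : Λ = 1 - h W W)
    (F : V → ℝ)
    (hF : ∀ v : V, F v = (-(h v W) + Real.sqrt ((h v W) ^ 2 + Λ * h v v)) / Λ)
    (P : Submodule ℝ V) (u : V) (hu : u ≠ 0) :
    ((F u = 1 ∧ ∀ w ∈ P, deriv (fun δ : ℝ => F (u + δ • w) ^ 2) 0 = 0) ↔
      (h (u - W) (u - W) = 1 ∧ ∀ w ∈ P, h (u - W) w = 0)) ∧
    ((F u = 1 ∧ ∀ w ∈ P, deriv (fun δ : ℝ => F (u + δ • w) ^ 2) 0 = 0) ↔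
      (∃ v : V, u = v + W ∧ h v v = 1 ∧ ∀ w ∈ P, h v w = 0)) := by
  have hΛpos : 0 < Λ := by rw [hΛ]; linarith
  set A := h u W with hAdef
  have hC : 0 < h u u := hposdef u hu
  have expand : h (u - W) (u - W) = h u u - 2 * A + h W W := by
    simp only [map_sub, LinearMap.sub_apply]
    rw [hsymm W u]; ring
  -- unit condition equivalence
  have unit_iff : F u = 1 ↔ h (u - W) (u - W) = 1 := by
    constructor
    · intro hF1
      rw [hF u] at hF1
      have h1 : Real.sqrt (A ^ 2 + Λ * h u u) = Λ + A := by
        field_simp at hF1; linarith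
      have hQnn : 0 ≤ A ^ 2 + Λ * h u u := by positivity
      have h2 : A ^ 2 + Λ * h u u = (Λ + A) ^ 2 := by
        rw [← h1, Real.sq_sqrt hQnn]
      rw [expand]
      nlinarith [hΛpos]
    · intro hv1
      have hv1' : h u u = Λ + 2 * A := by rw [expand] at hv1; linarith [hΛ]
      have hSpos : 0 < Λ + A := by linarith
      rw [hF u]
      have hq : A ^ 2 + Λ * h u u = (Λ + A) ^ 2 := by rw [hv1']; ring
      rw [hq, Real.sqrt_sq hSpos.le]
      field_simp
      linarith [hAdef]
  -- derivative computation, assuming unit condition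
  have deriv_eq : h (u - W) (u - W) = 1 → ∀ w : V,
      deriv (fun δ : ℝ => F (u + δ • w) ^ 2) 0 = 2 * h (u - W) w / (Λ + A) := by
    intro hv1 w
    have hv1' : h u u = Λ + 2 * A := by rw [expand] at hv1; linarith [hΛ]
    have hSpos : 0 < Λ + A := by linarith
    set B := h w W with hBdef
    set C := h u u with hCdef
    set D := h u w with hDdef
    set E := h w w with hEdef
    have hfun : (fun δ : ℝ => F (u + δ • w) ^ 2) =
        fun δ : ℝ => ((-(A + δ * B) +
          Real.sqrt ((A + δ * B) ^ 2 + Λ * (C + 2 * δ * D + δ ^ 2 * E))) / Λ) ^ 2 := by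
      funext δ
      rw [hF]
      have e1 : h (u + δ • w) W = A + δ * B := by
        simp [map_add, map_smul, hAdef, hBdef]
      have e2 : h (u + δ • w) (u + δ • w) = C + 2 * δ * D + δ ^ 2 * E := by
        simp only [map_add, map_smul, LinearMap.add_apply, LinearMap.smul_apply,
          smul_eq_mul, hCdef, hDdef, hEdef]
        rw [hsymm w u]; ring
      rw [e1, e2]
    rw [hfun]
    have h1 : HasDerivAt (fun δ : ℝ => A + δ * B) B 0 := by
      simpa using ((hasDerivAt_id (0:ℝ)).mul_const B).const_add A
    have h2 : HasDerivAt (fun δ : ℝ => C + 2 * δ * D + δ ^ 2 * E) (2 * D) 0 := by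
      have ha : HasDerivAt (fun δ : ℝ => 2 * δ * D) (2 * D) 0 := by
        simpa using (((hasDerivAt_id (0:ℝ)).const_mul 2).mul_const D)
      have hb : HasDerivAt (fun δ : ℝ => δ ^ 2 * E) 0 0 := by
        simpa using ((hasDerivAt_pow 2 (0:ℝ)).mul_const E)
      simpa [Pi.add_def] using ((ha.const_add C).add hb)
    have hq : HasDerivAt (fun δ : ℝ => (A + δ * B) ^ 2 + Λ * (C + 2 * δ * D + δ ^ 2 * E))
        (2 * A * B + Λ * (2 * D)) 0 := by
      have := (h1.pow 2).add (h2.const_mul Λ)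
      simpa [Pi.add_def, Pi.pow_def] using this
    have hq0 : (fun δ : ℝ => (A + δ * B) ^ 2 + Λ * (C + 2 * δ * D + δ ^ 2 * E)) 0 =
        (Λ + A) ^ 2 := by
      simp [hv1']; ring
    have hqne : (fun δ : ℝ => (A + δ * B) ^ 2 + Λ * (C + 2 * δ * D + δ ^ 2 * E)) 0 ≠ 0 := by
      rw [hq0]; positivity
    have hsqrt := hq.sqrt hqne
    have hsqval : Real.sqrt ((Λ + A) ^ 2) = Λ + A := Real.sqrt_sq hSpos.le
    have hfin : HasDerivAt
        (fun δ : ℝ => ((-(A + δ * B) +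
          Real.sqrt ((A + δ * B) ^ 2 + Λ * (C + 2 * δ * D + δ ^ 2 * E))) / Λ) ^ 2)
        (2 * ((-(A + 0 * B) + Real.sqrt ((A + 0 * B) ^ 2 + Λ * (C + 2 * 0 * D + 0 ^ 2 * E))) / Λ) ^ 1 *
          ((-B + (2 * A * B + Λ * (2 * D)) /
            (2 * Real.sqrt ((A + 0 * B) ^ 2 + Λ * (C + 2 * 0 * D + 0 ^ 2 * E)))) / Λ)) 0 := by
      exact ((h1.neg.add hsqrt).div_const Λ).pow 2
    rw [hfin.deriv]
    have hval0 : (A + 0 * B) ^ 2 + Λ * (C + 2 * 0 * D + 0 ^ 2 * E) = (Λ + A) ^ 2 := by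
      simp [hv1']; ring
    rw [hval0, hsqval]
    have hvw : h (u - W) w = D - B := by
      simp only [map_sub, LinearMap.sub_apply, hDdef, hBdef]
      rw [hsymm W w]
    rw [hvw]
    have hΛne : Λ ≠ 0 := ne_of_gt hΛpos
    have hSne : Λ + A ≠ 0 := ne_of_gt hSpos
    field_simp
    ring
  have main : (F u = 1 ∧ ∀ w ∈ P, deriv (fun δ : ℝ => F (u + δ • w) ^ 2) 0 = 0) ↔
      (h (u - W) (u - W) = 1 ∧ ∀ w ∈ P, h (u - W) w = 0) := by
    constructor
    · rintro ⟨hF1, hd⟩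
      have hv1 := unit_iff.mp hF1
      refine ⟨hv1, fun w hw => ?_⟩
      have := hd w hw
      rw [deriv_eq hv1 w] at this
      have hSne : Λ + A ≠ 0 := by
        have hv1' : h u u = Λ + 2 * A := by rw [expand] at hv1; linarith [hΛ]
        have : 0 < Λ + A := by linarith
        exact ne_of_gt this
      field_simp at this
      have hvw2 : h (u - W) w = h u w - h W w := by
        simp [map_sub, LinearMap.sub_apply]
      linarith
    · rintro ⟨hv1, hor⟩
      refine ⟨unit_iff.mpr hv1, fun w hw => ?_⟩
      rw [deriv_eq hv1 w, hor w hw]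
      simp
  refine ⟨main, main.trans ?_⟩
  constructor
  · rintro ⟨h1, h2⟩
    exact ⟨u - W, by abel, h1, h2⟩
  · rintro ⟨v, rfl, h1, h2⟩
    simpa using ⟨h1, h2⟩
end

section
/- For every nonzero v ∈ V, the function F² is twice continuously differentiable on a neighborhood of v, and the fundamental tensor g_v, defined as the symmetric bilinear form g_v(u,w) := (1/2)·∂²/∂δ∂η [F(v + δu + ηw)²] evaluated at δ = η = 0, is positive definite on V. Hence F is a Minkowski norm on V whose unit sphere is the ellipsoid {v : h(v − W, v − W) = 1} (the translate by W of the h-unit sphere). -/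
set_option maxHeartbeats 1000000 in
lemma auxInner (Λ A B P Q R : ℝ) (hm : 0 < A^2 + Λ*P) :
    HasDerivAt (fun t : ℝ => ((-(A + t*B) + Real.sqrt ((A + t*B)^2 + Λ*(P + 2*t*Q + t^2*R)))/Λ)^2)
      (2 * ((-A + Real.sqrt (A^2+Λ*P))/Λ) * ((-B + (A*B + Λ*Q)/Real.sqrt (A^2+Λ*P))/Λ)) 0 := by
  have hσ : 0 < Real.sqrt (A^2+Λ*P) := Real.sqrt_pos.mpr hm
  have ha : HasDerivAt (fun t : ℝ => A + t*B) B 0 := by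
    simpa using ((hasDerivAt_id (0:ℝ)).mul_const B).const_add A
  have hb : HasDerivAt (fun t : ℝ => P + 2*t*Q + t^2*R) (2*Q) 0 := by
    have h1 := (((hasDerivAt_id (0:ℝ)).const_mul 2).mul_const Q).const_add P
    have h2 := (hasDerivAt_pow 2 (0:ℝ)).mul_const R
    simpa [Pi.add_def] using h1.add h2
  have hmf : HasDerivAt (fun t : ℝ => (A + t*B)^2 + Λ*(P + 2*t*Q + t^2*R)) (2*A*B + 2*Λ*Q) 0 := by
    have := (ha.pow 2).add (hb.const_mul Λ)
    refine this.congr_deriv ?_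
    norm_num; ring
  have hs : HasDerivAt (fun t : ℝ => Real.sqrt ((A + t*B)^2 + Λ*(P + 2*t*Q + t^2*R)))
      ((A*B + Λ*Q)/Real.sqrt (A^2+Λ*P)) 0 := by
    have h0 : ((A + (0:ℝ)*B)^2 + Λ*(P + 2*0*Q + 0^2*R)) ≠ 0 := by
      norm_num; nlinarith
    have := (Real.hasDerivAt_sqrt h0).comp 0 hmf
    refine this.congr_deriv ?_
    norm_num
    field_simp
  have hinner := ((ha.neg.add hs).div_const Λ).pow 2
  refine hinner.congr_deriv ?_
  norm_num

set_option maxHeartbeats 1000000 in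
lemma auxOuter (Λ A B₁ B₂ P Q₁ Q₂ R S : ℝ) (hΛ : Λ ≠ 0) (hm : 0 < A^2 + Λ*P) :
    HasDerivAt (fun t : ℝ => 2 * ((-(A + t*B₁) + Real.sqrt ((A + t*B₁)^2 + Λ*(P + 2*t*Q₁ + t^2*R)))/Λ) *
        ((-B₂ + ((A + t*B₁)*B₂ + Λ*(Q₂ + t*S))/Real.sqrt ((A + t*B₁)^2 + Λ*(P + 2*t*Q₁ + t^2*R)))/Λ))
      (2/Λ^2 * (((A*B₁+Λ*Q₁)/Real.sqrt (A^2+Λ*P) - B₁) * ((A*B₂+Λ*Q₂)/Real.sqrt (A^2+Λ*P) - B₂)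
        + (Real.sqrt (A^2+Λ*P) - A) * ((B₁*B₂+Λ*S)/Real.sqrt (A^2+Λ*P)
            - (A*B₁+Λ*Q₁)*(A*B₂+Λ*Q₂)/Real.sqrt (A^2+Λ*P)^3))) 0 := by
  have hσ : 0 < Real.sqrt (A^2+Λ*P) := Real.sqrt_pos.mpr hm
  have ha : HasDerivAt (fun t : ℝ => A + t*B₁) B₁ 0 := by
    simpa using ((hasDerivAt_id (0:ℝ)).mul_const B₁).const_add A
  have hb : HasDerivAt (fun t : ℝ => P + 2*t*Q₁ + t^2*R) (2*Q₁) 0 := by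
    have h1 := (((hasDerivAt_id (0:ℝ)).const_mul 2).mul_const Q₁).const_add P
    have h2 := (hasDerivAt_pow 2 (0:ℝ)).mul_const R
    simpa [Pi.add_def] using h1.add h2
  have hmf : HasDerivAt (fun t : ℝ => (A + t*B₁)^2 + Λ*(P + 2*t*Q₁ + t^2*R)) (2*A*B₁ + 2*Λ*Q₁) 0 := by
    have := (ha.pow 2).add (hb.const_mul Λ)
    refine this.congr_deriv ?_
    norm_num; ring
  have hs : HasDerivAt (fun t : ℝ => Real.sqrt ((A + t*B₁)^2 + Λ*(P + 2*t*Q₁ + t^2*R)))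
      ((A*B₁ + Λ*Q₁)/Real.sqrt (A^2+Λ*P)) 0 := by
    have h0 : ((A + (0:ℝ)*B₁)^2 + Λ*(P + 2*0*Q₁ + 0^2*R)) ≠ 0 := by
      norm_num; nlinarith
    have := (Real.hasDerivAt_sqrt h0).comp 0 hmf
    refine this.congr_deriv ?_
    norm_num
    field_simp
  have hn : HasDerivAt (fun t : ℝ => (A + t*B₁)*B₂ + Λ*(Q₂ + t*S)) (B₁*B₂ + Λ*S) 0 := by
    have h1 := ha.mul_const B₂
    have h2 := (((hasDerivAt_id (0:ℝ)).mul_const S).const_add Q₂).const_mul Λ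
    simpa [Pi.add_def] using h1.add h2
  have hq := hn.div hs (by simpa using ne_of_gt hσ)
  have hf1 : HasDerivAt (fun t : ℝ =>
      2 * ((-(A + t*B₁) + Real.sqrt ((A + t*B₁)^2 + Λ*(P + 2*t*Q₁ + t^2*R)))/Λ))
      (2 * ((-B₁ + (A*B₁ + Λ*Q₁)/Real.sqrt (A^2+Λ*P))/Λ)) 0 :=
    ((ha.neg.add hs).div_const Λ).const_mul 2
  have hf2 : HasDerivAt (fun t : ℝ =>
      (-B₂ + ((A + t*B₁)*B₂ + Λ*(Q₂ + t*S))/Real.sqrt ((A + t*B₁)^2 + Λ*(P + 2*t*Q₁ + t^2*R)))/Λ)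
      (((B₁*B₂ + Λ*S) * Real.sqrt (A^2+Λ*P)
        - (A*B₂ + Λ*Q₂) * ((A*B₁ + Λ*Q₁)/Real.sqrt (A^2+Λ*P))) / Real.sqrt (A^2+Λ*P)^2 / Λ) 0 := by
    have := (hq.const_add (-B₂)).div_const Λ
    refine this.congr_deriv ?_ <;> norm_num
  have := hf1.mul hf2
  refine this.congr_deriv ?_
  norm_num
  obtain ⟨σ, hσeq⟩ : ∃ σ, Real.sqrt (A^2+Λ*P) = σ := ⟨_, rfl⟩
  rw [hσeq] at hσ ⊢
  field_simp
  ring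

noncomputable def gVal (Λ A B₁ B₂ P Q₁ Q₂ S : ℝ) : ℝ :=
  2/Λ^2 * (((A*B₁+Λ*Q₁)/Real.sqrt (A^2+Λ*P) - B₁) * ((A*B₂+Λ*Q₂)/Real.sqrt (A^2+Λ*P) - B₂)
    + (Real.sqrt (A^2+Λ*P) - A) * ((B₁*B₂+Λ*S)/Real.sqrt (A^2+Λ*P)
        - (A*B₁+Λ*Q₁)*(A*B₂+Λ*Q₂)/Real.sqrt (A^2+Λ*P)^3))

set_option maxHeartbeats 2000000 in
/-- For every nonzero `v`, `F²` is `C²` near `v` and the fundamental tensor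
`g_v(u,w) = (1/2)∂²_{δη}F(v + δu + ηw)²|₀` is positive definite; hence the Randers norm
`F` with Zermelo data `(h, W)` is a Minkowski norm (positive and positively homogeneous
on nonzero vectors) whose unit sphere is the ellipsoid `{x : h(x − W, x − W) = 1}`. -/
theorem stmt_4 {V : Type*} [NormedAddCommGroup V] [NormedSpace ℝ V]
    [FiniteDimensional ℝ V]
    (h : V →ₗ[ℝ] V →ₗ[ℝ] ℝ)
    (hsymm : ∀ x y : V, h x y = h y x)
    (hposdef : ∀ x : V, x ≠ 0 → 0 < h x x)
    (W : V) (hW : h W W < 1)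
    (Λ : ℝ) (hΛ : Λ = 1 - h W W)
    (F : V → ℝ)
    (hF : ∀ v : V, F v = (-(h v W) + Real.sqrt ((h v W) ^ 2 + Λ * h v v)) / Λ) :
    (∀ v : V, v ≠ 0 →
      ContDiffAt ℝ 2 (fun x : V => F x ^ 2) v ∧
      (∀ u w : V,
        (1 / 2) * deriv (fun δ : ℝ =>
            deriv (fun η : ℝ => F (v + δ • u + η • w) ^ 2) 0) 0 =
        (1 / 2) * deriv (fun δ : ℝ =>
            deriv (fun η : ℝ => F (v + δ • w + η • u) ^ 2) 0) 0) ∧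
      (∀ u : V, u ≠ 0 →
        0 < (1 / 2) * deriv (fun δ : ℝ =>
            deriv (fun η : ℝ => F (v + δ • u + η • u) ^ 2) 0) 0) ∧
      0 < F v ∧
      (∀ c : ℝ, 0 < c → F (c • v) = c * F v)) ∧
    {x : V | F x = 1} = {x : V | h (x - W) (x - W) = 1} := by
  have hΛpos : 0 < Λ := by rw [hΛ]; linarith
  have hΛne : Λ ≠ 0 := ne_of_gt hΛpos
  have hnn : ∀ x : V, 0 ≤ h x x := by
    intro x
    by_cases hx : x = 0
    · simp [hx]
    · exact (hposdef x hx).le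
  have hCS : ∀ x y : V, (h x y)^2 ≤ h x x * h y y := by
    intro x y
    by_cases hy : y = 0
    · simp [hy, mul_nonneg (hnn x) (hnn y)]
    · have hR := hposdef y hy
      have h0 := hnn ((h y y) • x - (h x y) • y)
      simp only [map_sub, map_smul, LinearMap.sub_apply, LinearMap.smul_apply, smul_eq_mul] at h0
      rw [hsymm y x] at h0
      nlinarith [h0, hR]
  have hmpos : ∀ x : V, x ≠ 0 → 0 < (h x W)^2 + Λ * h x x := by
    intro x hx
    nlinarith [hposdef x hx, sq_nonneg (h x W), mul_pos hΛpos (hposdef x hx)]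
  -- inner derivative
  have hInner : ∀ x : V, x ≠ 0 → ∀ w : V,
      HasDerivAt (fun η : ℝ => F (x + η • w) ^ 2)
        (2 * ((-(h x W) + Real.sqrt ((h x W)^2 + Λ*(h x x)))/Λ) *
          ((-(h w W) + ((h x W)*(h w W) + Λ*(h x w))/Real.sqrt ((h x W)^2 + Λ*(h x x)))/Λ)) 0 := by
    intro x hx w
    have e1 : ∀ η : ℝ, h (x + η • w) W = h x W + η * h w W := by
      intro η; simp [map_add, map_smul, smul_eq_mul]
    have e2 : ∀ η : ℝ, h (x + η • w) (x + η • w) = h x x + 2*η*(h x w) + η^2*(h w w) := by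
      intro η
      simp only [map_add, map_smul, LinearMap.add_apply, LinearMap.smul_apply, smul_eq_mul]
      rw [hsymm w x]; ring
    have hfe : (fun η : ℝ => F (x + η • w) ^ 2)
        = (fun η : ℝ => ((-(h x W + η * h w W)
            + Real.sqrt ((h x W + η * h w W)^2
              + Λ*(h x x + 2*η*(h x w) + η^2*(h w w))))/Λ)^2) := by
      funext η
      rw [hF, e1 η, e2 η]
    rw [hfe]
    exact auxInner Λ (h x W) (h w W) (h x x) (h x w) (h w w) (hmpos x hx)
  -- the outer (mixed) derivative
  have hOuterEq : ∀ v : V, v ≠ 0 → ∀ u w : V,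
      deriv (fun δ : ℝ => deriv (fun η : ℝ => F (v + δ • u + η • w) ^ 2) 0) 0
      = gVal Λ (h v W) (h u W) (h w W) (h v v) (h v u) (h v w) (h u w) := by
    intro v hv u w
    have hev : ∀ᶠ δ : ℝ in nhds 0, v + δ • u ≠ 0 := by
      have hc : ContinuousAt (fun δ : ℝ => v + δ • u) 0 := by fun_prop
      have := hc.eventually_ne (by simpa using hv)
      simpa using this
    have heq : (fun δ : ℝ => deriv (fun η : ℝ => F (v + δ • u + η • w) ^ 2) 0)
        =ᶠ[nhds 0] (fun δ : ℝ =>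
          2 * ((-(h v W + δ*(h u W)) + Real.sqrt ((h v W + δ*(h u W))^2
              + Λ*(h v v + 2*δ*(h v u) + δ^2*(h u u))))/Λ) *
            ((-(h w W) + ((h v W + δ*(h u W))*(h w W) + Λ*(h v w + δ*(h u w)))/Real.sqrt
              ((h v W + δ*(h u W))^2 + Λ*(h v v + 2*δ*(h v u) + δ^2*(h u u))))/Λ)) := by
      filter_upwards [hev] with δ hδ
      rw [(hInner (v + δ • u) hδ w).deriv]
      have ea : h (v + δ • u) W = h v W + δ*(h u W) := by
        simp [map_add, map_smul, smul_eq_mul]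
      have eb : h (v + δ • u) (v + δ • u) = h v v + 2*δ*(h v u) + δ^2*(h u u) := by
        simp only [map_add, map_smul, LinearMap.add_apply, LinearMap.smul_apply, smul_eq_mul]
        rw [hsymm u v]; ring
      have ec : h (v + δ • u) w = h v w + δ*(h u w) := by
        simp [map_add, map_smul, smul_eq_mul]
      rw [ea, eb, ec]
    rw [heq.deriv_eq]
    simp only [gVal]
    exact (auxOuter Λ (h v W) (h u W) (h w W) (h v v) (h v u) (h v w) (h u u) (h u w)
      hΛne (hmpos v hv)).deriv
  -- C² regularity
  have hch1 : ContDiff ℝ 2 (fun x : V => h x W) := by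
    have e : ⇑(LinearMap.toContinuousLinearMap (h.flip W)) = fun x : V => h x W := by
      ext x; simp
    rw [← e]
    exact (LinearMap.toContinuousLinearMap (h.flip W)).contDiff
  have hch2 : ContDiff ℝ 2 (fun x : V => h x x) := by
    let hL : V →ₗ[ℝ] (V →L[ℝ] ℝ) :=
      { toFun := fun x => LinearMap.toContinuousLinearMap (h x)
        map_add' := fun a b => by ext y; simp
        map_smul' := fun c a => by ext y; simp }
    have e : (fun x : V => ((LinearMap.toContinuousLinearMap hL) x) x) = fun x : V => h x x := by
      funext x; simp [hL]
    rw [← e]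
    exact (LinearMap.toContinuousLinearMap hL).contDiff.clm_apply contDiff_id
  have hCD : ∀ v : V, v ≠ 0 → ContDiffAt ℝ 2 (fun x : V => F x ^ 2) v := by
    intro v hv
    have hfe : (fun x : V => F x ^ 2)
        = fun x : V => ((-(h x W) + Real.sqrt ((h x W)^2 + Λ * h x x))/Λ)^2 := by
      funext x; rw [hF]
    rw [hfe]
    have hg : ContDiff ℝ 2 (fun x : V => (h x W)^2 + Λ * h x x) :=
      (hch1.pow 2).add (contDiff_const.mul hch2)
    have hs : ContDiffAt ℝ 2 (fun x : V => Real.sqrt ((h x W)^2 + Λ * h x x)) v := by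
      have := (Real.contDiffAt_sqrt (n := 2) (ne_of_gt (hmpos v hv))).comp v hg.contDiffAt
      exact this
    exact ((hch1.contDiffAt.neg.add hs).div_const Λ).pow 2
  -- positivity of F
  have hFpos : ∀ v : V, v ≠ 0 → 0 < F v := by
    intro v hv
    rw [hF]
    have hm := hmpos v hv
    have hs2 := Real.sq_sqrt hm.le
    have hsn := Real.sqrt_nonneg ((h v W)^2 + Λ * h v v)
    have hlt : h v W < Real.sqrt ((h v W)^2 + Λ * h v v) := by
      nlinarith [mul_pos hΛpos (hposdef v hv)]
    apply div_pos _ hΛpos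
    linarith
  -- homogeneity
  have hHomog : ∀ v : V, ∀ c : ℝ, 0 < c → F (c • v) = c * F v := by
    intro v c hc
    rw [hF, hF]
    simp only [map_smul, LinearMap.smul_apply, smul_eq_mul]
    rw [show (c * h v W)^2 + Λ * (c * (c * h v v)) = c^2 * ((h v W)^2 + Λ * h v v) by ring,
      Real.sqrt_mul (by positivity) _, Real.sqrt_sq hc.le]
    field_simp
  -- unit sphere
  have hsphere : {x : V | F x = 1} = {x : V | h (x - W) (x - W) = 1} := by
    ext x
    simp only [Set.mem_setOf_eq]
    have hexp : h (x - W) (x - W) = h x x - 2 * h x W + h W W := by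
      simp only [map_sub, LinearMap.sub_apply]
      rw [hsymm W x]; ring
    have hm0 : 0 ≤ (h x W)^2 + Λ * h x x := by
      nlinarith [hnn x, sq_nonneg (h x W), mul_nonneg hΛpos.le (hnn x)]
    constructor
    · intro hx1
      rw [hF] at hx1
      have hs : Real.sqrt ((h x W)^2 + Λ * h x x) = h x W + Λ := by
        field_simp at hx1; linarith
      have hsq : (h x W)^2 + Λ * h x x = (h x W + Λ)^2 := by
        rw [← Real.sq_sqrt hm0, hs]
      have hxx : h x x = 2 * h x W + Λ := by
        have := mul_left_cancel₀ hΛne (show Λ * h x x = Λ * (2 * h x W + Λ) by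
          linear_combination hsq)
        exact this
      rw [hexp, hxx]
      rw [hΛ]; ring
    · intro hx1
      rw [hF]
      have hxx : h x x = 2 * h x W + Λ := by
        rw [hexp] at hx1
        rw [hΛ]; linarith
      have hcs := hCS (x - W) W
      rw [hx1] at hcs
      have hxw : h (x - W) W = h x W - h W W := by
        simp [map_sub, LinearMap.sub_apply]
      have hApos : 0 < h x W + Λ := by
        rw [hxw] at hcs
        nlinarith [hW, hΛpos, sq_nonneg (1 + h x W - h W W), hΛ]
      have hval : (h x W)^2 + Λ * h x x = (h x W + Λ)^2 := by
        rw [hxx]; ring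
      rw [hval, Real.sqrt_sq hApos.le]
      field_simp
      ring
  refine ⟨fun v hv => ⟨hCD v hv, ?_, ?_, hFpos v hv, fun c hc => hHomog v c hc⟩, hsphere⟩
  · -- symmetry
    intro u w
    rw [hOuterEq v hv u w, hOuterEq v hv w u, hsymm w u]
    simp only [gVal]
    ring
  · -- positivity of fundamental tensor
    intro u hu
    rw [hOuterEq v hv u u]
    simp only [gVal]
    have hR := hposdef u hu
    have hm := hmpos v hv
    set A := h v W with hAdef
    set B := h u W with hBdef
    set P := h v v with hPdef
    set Q := h v u with hQdef
    set R := h u u with hRdef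
    obtain ⟨σ, hσeq⟩ : ∃ s, Real.sqrt (A^2 + Λ*P) = s := ⟨_, rfl⟩
    rw [hσeq]
    have hσpos : 0 < σ := hσeq ▸ Real.sqrt_pos.mpr hm
    have hσ2 : σ^2 = A^2 + Λ*P := by rw [← hσeq]; exact Real.sq_sqrt hm.le
    have hσA : A < σ := by
      nlinarith [hσpos, hσ2, mul_pos hΛpos (hposdef v hv)]
    have hCS' : Q^2 ≤ P*R := by
      have := hCS v u; nlinarith [this]
    have hC1 : 0 ≤ A^2*R - 2*A*B*Q + B^2*P := by
      have h0 := hnn (A • u - B • v)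
      simp only [map_sub, map_smul, LinearMap.sub_apply, LinearMap.smul_apply, smul_eq_mul] at h0
      rw [hsymm u v] at h0
      nlinarith [h0]
    have key : 0 < σ*((A*B+Λ*Q) - B*σ)^2 + (σ-A)*((B^2+Λ*R)*σ^2 - (A*B+Λ*Q)^2) := by
      have e4 : (B^2+Λ*R)*σ^2 - (A*B+Λ*Q)^2
          = Λ*(A^2*R - 2*A*B*Q + B^2*P) + Λ^2*(P*R - Q^2) := by
        rw [hσ2]; ring
      by_cases hdep : P*R - Q^2 = 0
      · have hzv : R • v - Q • u = 0 := by
          by_contra hne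
          have hp := hposdef _ hne
          have he : h (R • v - Q • u) (R • v - Q • u) = R*(P*R - Q^2) := by
            simp only [map_sub, map_smul, LinearMap.sub_apply, LinearMap.smul_apply, smul_eq_mul]
            rw [hsymm u v]; ring
          rw [he, hdep, mul_zero] at hp
          exact lt_irrefl 0 hp
        have hQne : Q ≠ 0 := by
          intro hQ0
          rw [hQ0, zero_smul, sub_zero] at hzv
          rcases smul_eq_zero.mp hzv with h1 | h1
          · exact (ne_of_gt hR) h1
          · exact hv h1
        have hr1 : R*A = Q*B := by
          have := congrArg (fun z => h z W) hzv
          simp only [map_sub, map_smul, LinearMap.sub_apply, LinearMap.smul_apply,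
            smul_eq_mul, map_zero, LinearMap.zero_apply] at this
          linarith [sub_eq_zero.mp this]
        have hne0 : (A*B+Λ*Q) - B*σ ≠ 0 := by
          intro h0
          have e1 : (A*B+Λ*Q)^2 = B^2*σ^2 := by
            linear_combination (A*B+Λ*Q + B*σ)*h0
          rw [hσ2] at e1
          have e2L : Λ*(Q^2*(B^2+Λ*R)) = 0 := by
            linear_combination R*e1 + (Λ*B^2)*hdep + (-2*Λ*B*Q)*hr1
          have e2 : Q^2*(B^2+Λ*R) = 0 := by
            rcases mul_eq_zero.mp e2L with h' | h'
            · exact absurd h' hΛne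
            · exact h'
          have hQ2 : 0 < Q^2 := lt_of_le_of_ne (sq_nonneg Q) (Ne.symm (pow_ne_zero 2 hQne))
          have hBR : 0 < B^2 + Λ*R := by nlinarith [sq_nonneg B, mul_pos hΛpos hR]
          nlinarith [mul_pos hQ2 hBR]
        have t1 : 0 < σ*((A*B+Λ*Q) - B*σ)^2 :=
          mul_pos hσpos (lt_of_le_of_ne (sq_nonneg _) (Ne.symm (pow_ne_zero 2 hne0)))
        have t2 : 0 ≤ (σ-A)*((B^2+Λ*R)*σ^2 - (A*B+Λ*Q)^2) := by
          apply mul_nonneg (by linarith)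
          rw [e4, hdep, mul_zero, add_zero]
          exact mul_nonneg hΛpos.le hC1
        linarith
      · have hPRpos : 0 < P*R - Q^2 := lt_of_le_of_ne (by linarith) (Ne.symm hdep)
        have t1 : 0 ≤ σ*((A*B+Λ*Q) - B*σ)^2 := mul_nonneg hσpos.le (sq_nonneg _)
        have t2 : 0 < (σ-A)*((B^2+Λ*R)*σ^2 - (A*B+Λ*Q)^2) := by
          apply mul_pos (by linarith)
          rw [e4]
          nlinarith [mul_nonneg hΛpos.le hC1, mul_pos (mul_pos hΛpos hΛpos) hPRpos]
        linarith
    have hX : 0 < ((A*B+Λ*Q)/σ - B) * ((A*B+Λ*Q)/σ - B)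
        + (σ - A) * ((B*B+Λ*R)/σ - (A*B+Λ*Q)*(A*B+Λ*Q)/σ^3) := by
      have e3 : ((A*B+Λ*Q)/σ - B) * ((A*B+Λ*Q)/σ - B)
          + (σ - A) * ((B*B+Λ*R)/σ - (A*B+Λ*Q)*(A*B+Λ*Q)/σ^3)
          = (σ*((A*B+Λ*Q) - B*σ)^2 + (σ-A)*((B^2+Λ*R)*σ^2 - (A*B+Λ*Q)^2))/σ^3 := by
        field_simp
      rw [e3]
      exact div_pos key (pow_pos hσpos 3)
    nlinarith [mul_pos (show (0:ℝ) < 2/Λ^2 by positivity) hX]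
end

section
/- For every nonzero u ∈ ker Ω there exists a unique real number s > 0 such that sT + u belongs to the topological frontier of A₀. (This is the key step establishing that a cone triple (Ω, T, ·) determines a unique positively one-homogeneous function F on ker Ω \ {0}, namely F(u) := s, characterizing the cone by v ∈ ∂A₀ ⟺ v = F(π(v))T + π(v) with π(v) = v − Ω(v)T.) -/
set_option maxHeartbeats 1000000 in
/-- Let `A₀` be a nonempty open convex cone, `Ω` a linear functional which
is positive on the nonzero points of the closure of `A₀`, and `T ∈ A₀` with `Ω T = 1`.
Then for every nonzero `u ∈ ker Ω` there is a unique `s > 0` such that `sT + u` lies on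
the frontier of `A₀` (so a cone triple determines a unique one-homogeneous `F` on
`ker Ω \ {0}` with `v ∈ ∂A₀ ⟺ v = F(π v)T + π v`). -/
theorem stmt_5 {V : Type*} [NormedAddCommGroup V] [NormedSpace ℝ V]
    [FiniteDimensional ℝ V]
    (A₀ : Set V) (hne : A₀.Nonempty) (hopen : IsOpen A₀) (hconv : Convex ℝ A₀)
    (hcone : ∀ x ∈ A₀, ∀ lam : ℝ, 0 < lam → lam • x ∈ A₀)
    (Ω : V →ₗ[ℝ] ℝ) (hΩ : ∀ x ∈ closure A₀, x ≠ 0 → 0 < Ω x)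
    (T : V) (hT : T ∈ A₀) (hΩT : Ω T = 1) :
    ∀ u : V, Ω u = 0 → u ≠ 0 →
      ∃! s : ℝ, 0 < s ∧ s • T + u ∈ frontier A₀ := by
  intro u hΩu hu
  -- closure A₀ + A₀ ⊆ A₀
  have hadd : ∀ x ∈ closure A₀, ∀ y ∈ A₀, x + y ∈ A₀ := by
    intro x hx y hy
    have h2 : (1/2 : ℝ) • y + (1/2 : ℝ) • x ∈ interior A₀ :=
      hconv.combo_interior_closure_mem_interior (by rwa [hopen.interior_eq]) hx
        (by norm_num) (by norm_num) (by norm_num)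
    rw [hopen.interior_eq] at h2
    have h3 := hcone _ h2 2 (by norm_num)
    rw [smul_add, smul_smul, smul_smul] at h3
    norm_num at h3
    rwa [add_comm]
  set C : Set ℝ := {s | s • T + u ∈ closure A₀} with hCdef
  have hΩval : ∀ s : ℝ, Ω (s • T + u) = s := by
    intro s; simp [map_add, map_smul, hΩT, hΩu]
  have hCpos : ∀ s ∈ C, 0 < s := by
    intro s hs
    rcases eq_or_ne (s • T + u) 0 with h0 | h0
    · exfalso
      have hs0 : s = 0 := by
        have := hΩval s; rw [h0] at this; simpa using this.symm
      rw [hs0, zero_smul, zero_add] at h0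
      exact hu h0
    · have := hΩ _ hs h0
      rwa [hΩval] at this
  have hCclosed : IsClosed C := by
    have hc : Continuous fun s : ℝ => s • T + u :=
      (continuous_id.smul continuous_const).add continuous_const
    exact isClosed_closure.preimage hc
  have hCne : C.Nonempty := by
    have hO : IsOpen {t : ℝ | T + t • u ∈ A₀} := by
      have hc : Continuous fun t : ℝ => T + t • u :=
        continuous_const.add (continuous_id.smul continuous_const)
      exact hopen.preimage hc
    have h0 : (0 : ℝ) ∈ {t : ℝ | T + t • u ∈ A₀} := by simpa using hT
    rcases Metric.isOpen_iff.1 hO 0 h0 with ⟨ε, hε, hball⟩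
    have ht : T + (ε / 2) • u ∈ A₀ := by
      apply hball
      rw [Metric.mem_ball, Real.dist_eq, sub_zero, abs_of_pos (by linarith : (0:ℝ) < ε / 2)]
      linarith
    have hεne : (ε : ℝ) ≠ 0 := ne_of_gt hε
    have h1 := hcone _ ht (2 / ε) (by positivity)
    rw [smul_add, smul_smul] at h1
    have : (2 / ε) * (ε / 2) = 1 := by field_simp
    rw [this, one_smul] at h1
    exact ⟨2 / ε, subset_closure h1⟩
  have hbdd : BddBelow C := ⟨0, fun s hs => (hCpos s hs).le⟩
  set s₀ := sInf C with hs₀def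
  have hs₀C : s₀ ∈ C := hCclosed.csInf_mem hCne hbdd
  have hs₀pos : 0 < s₀ := hCpos _ hs₀C
  have hnotA : s₀ • T + u ∉ A₀ := by
    intro hmem
    have hO : IsOpen {s : ℝ | s • T + u ∈ A₀} := by
      have hc : Continuous fun s : ℝ => s • T + u :=
        (continuous_id.smul continuous_const).add continuous_const
      exact hopen.preimage hc
    rcases Metric.isOpen_iff.1 hO s₀ hmem with ⟨δ, hδ, hball⟩
    have hmem' : (s₀ - δ / 2) ∈ {s : ℝ | s • T + u ∈ A₀} := by
      apply hball
      rw [Metric.mem_ball, Real.dist_eq, show s₀ - δ / 2 - s₀ = -(δ / 2) by ring,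
        abs_neg, abs_of_pos (by linarith : (0:ℝ) < δ / 2)]
      linarith
    have hC' : (s₀ - δ / 2) ∈ C := subset_closure hmem'
    have := csInf_le hbdd hC'
    rw [← hs₀def] at this
    linarith
  have hfront : s₀ • T + u ∈ frontier A₀ := by
    rw [frontier, hopen.interior_eq]
    exact ⟨hs₀C, hnotA⟩
  refine ⟨s₀, ⟨hs₀pos, hfront⟩, ?_⟩
  rintro s ⟨hspos, hsf⟩
  have hsC : s ∈ C := frontier_subset_closure hsf
  have hle : s₀ ≤ s := csInf_le hbdd hsC
  rcases eq_or_lt_of_le hle with h | h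
  · exact h.symm
  · exfalso
    have hTd : (s - s₀) • T ∈ A₀ := hcone _ hT _ (by linarith)
    have hmem : (s₀ • T + u) + (s - s₀) • T ∈ A₀ := hadd _ hs₀C _ hTd
    have heq : (s₀ • T + u) + (s - s₀) • T = s • T + u := by module
    rw [heq] at hmem
    have : s • T + u ∈ interior A₀ := by rwa [hopen.interior_eq]
    exact hsf.2 this
end

section
/- Let x̃ = (x̃⁰, x̃¹, …, x̃ⁿ) : I → ℝ^{n+1} be a twice differentiable curve on an open interval I satisfying the geodesic-type system (x̃ᵏ)'' = −Σ_{i,j} γᵏᵢⱼ(x̃, x̃')·(x̃ⁱ)'·(x̃ʲ)' for every k ∈ {0,…,n}, and suppose (x̃⁰)' > 0 on I. Let J := x̃⁰(I), let ρ : J → I be the inverse of x̃⁰, and define the reparametrized curve x(t) := (t, x¹(t), …, xⁿ(t)) with xᵏ(t) := x̃ᵏ(ρ(t)). Then x is twice differentiable and for every k ∈ {1,…,n} and t ∈ J: (d²xᵏ/dt²)(t) = −Σ_{i,j} γᵏᵢⱼ(x(t), ẋ(t))·ẋⁱ(t)·ẋʲ(t) + (Σ_{i,j} γ⁰ᵢⱼ(x(t),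 ẋ(t))·ẋⁱ(t)·ẋʲ(t))·ẋᵏ(t), where ẋ(t) = (1, ẋ¹(t), …, ẋⁿ(t)) denotes the velocity with time-component ẋ⁰ = 1. -/
/-- If `x̃ : I → ℝ^{n+1}` solves the geodesic-type system
`(x̃ᵏ)'' = −Σ γᵏᵢⱼ(x̃, x̃')(x̃ⁱ)'(x̃ʲ)'` with `(x̃⁰)' > 0`, then the reparametrization
`x(t) = x̃(ρ(t))` by the time `t = x̃⁰` (with inverse `ρ`) is twice differentiable and
solves `ẍᵏ = −Σ γᵏᵢⱼ(x, ẋ)ẋⁱẋʲ + (Σ γ⁰ᵢⱼ(x, ẋ)ẋⁱẋʲ)ẋᵏ` for `k = 1, …, n`, where the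
velocity `ẋ` has time-component `ẋ⁰ = 1`. -/
theorem stmt_8 (n : ℕ) (hn : 1 ≤ n)
    (γ : Fin (n + 1) → Fin (n + 1) → Fin (n + 1) →
      (Fin (n + 1) → ℝ) → (Fin (n + 1) → ℝ) → ℝ)
    (hγcont : ∀ k i j, ContinuousOn
      (fun p : (Fin (n + 1) → ℝ) × (Fin (n + 1) → ℝ) => γ k i j p.1 p.2)
      {p | p.2 ≠ 0})
    (hγhom : ∀ k i j x v, ∀ lam : ℝ, 0 < lam → γ k i j x (lam • v) = γ k i j x v)
    (a b : ℝ) (hab : a < b)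
    (xt : ℝ → Fin (n + 1) → ℝ)
    (hd1 : ∀ k, ∀ ρ ∈ Set.Ioo a b, DifferentiableAt ℝ (fun ρ => xt ρ k) ρ)
    (hd2 : ∀ k, ∀ ρ ∈ Set.Ioo a b,
      DifferentiableAt ℝ (deriv (fun ρ => xt ρ k)) ρ)
    (hgeo : ∀ k, ∀ ρ ∈ Set.Ioo a b,
      deriv (deriv (fun ρ => xt ρ k)) ρ =
        - ∑ i, ∑ j, γ k i j (xt ρ) (fun l => deriv (fun ρ => xt ρ l) ρ)
            * deriv (fun ρ => xt ρ i) ρ * deriv (fun ρ => xt ρ j) ρ)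
    (hpos : ∀ ρ ∈ Set.Ioo a b, 0 < deriv (fun ρ => xt ρ 0) ρ)
    (J : Set ℝ) (hJ : J = (fun ρ => xt ρ 0) '' Set.Ioo a b)
    (ρf : ℝ → ℝ)
    (hρf1 : ∀ ρ ∈ Set.Ioo a b, ρf (xt ρ 0) = ρ)
    (hρf2 : ∀ t ∈ J, ρf t ∈ Set.Ioo a b ∧ xt (ρf t) 0 = t)
    (x : ℝ → Fin (n + 1) → ℝ) (hx : ∀ t k, x t k = xt (ρf t) k) :
    ∀ t ∈ J,
      (∀ l, DifferentiableAt ℝ (fun s => x s l) t ∧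
        DifferentiableAt ℝ (deriv (fun s => x s l)) t) ∧
      deriv (fun s => x s 0) t = 1 ∧
      (∀ k : Fin (n + 1), k ≠ 0 →
        deriv (deriv (fun s => x s k)) t =
          - (∑ i, ∑ j, γ k i j (x t) (fun l => deriv (fun s => x s l) t)
              * deriv (fun s => x s i) t * deriv (fun s => x s j) t)
          + (∑ i, ∑ j, γ 0 i j (x t) (fun l => deriv (fun s => x s l) t)
              * deriv (fun s => x s i) t * deriv (fun s => x s j) t)
            * deriv (fun s => x s k) t) := by
  classical
  set f : ℝ → ℝ := fun ρ => xt ρ 0 with hfdef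
  -- continuity of each component on Ioo a b
  have hcont : ∀ k, ContinuousOn (fun ρ => xt ρ k) (Set.Ioo a b) := fun k ρ hρ =>
    ((hd1 k ρ hρ).continuousAt).continuousWithinAt
  -- f is strictly monotone on Ioo a b
  have hmono : StrictMonoOn f (Set.Ioo a b) := by
    apply strictMonoOn_of_deriv_pos (convex_Ioo a b) (hcont 0)
    intro ρ hρ
    rw [interior_Ioo] at hρ
    exact hpos ρ hρ
  -- J is a neighborhood of each of its points
  have hJn : ∀ t ∈ J, J ∈ nhds t := by
    intro t ht
    rw [hJ] at ht
    obtain ⟨ρ₀, hρ₀, rfl⟩ := ht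
    obtain ⟨ha0, hb0⟩ := hρ₀
    set ε := min (ρ₀ - a) (b - ρ₀) / 2 with hε
    have hεpos : 0 < ε := by
      apply div_pos _ (by norm_num)
      exact lt_min (by linarith) (by linarith)
    have h1 : Set.Icc (ρ₀ - ε) (ρ₀ + ε) ⊆ Set.Ioo a b := by
      intro y hy
      have h2 : ε ≤ (ρ₀ - a) / 2 := by
        apply div_le_div_of_nonneg_right (min_le_left _ _) (by norm_num)
      have h3 : ε ≤ (b - ρ₀) / 2 := by
        apply div_le_div_of_nonneg_right (min_le_right _ _) (by norm_num)
      constructor <;> [skip; skip] <;> cases' hy with hy1 hy2 <;> linarith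
    have hle : ρ₀ - ε ≤ ρ₀ + ε := by linarith
    have hIVT : Set.Icc (f (ρ₀ - ε)) (f (ρ₀ + ε)) ⊆ f '' Set.Icc (ρ₀ - ε) (ρ₀ + ε) :=
      intermediate_value_Icc hle ((hcont 0).mono h1)
    have hsub : Set.Ioo (f (ρ₀ - ε)) (f (ρ₀ + ε)) ⊆ f '' Set.Ioo a b := by
      intro y hy
      obtain ⟨z, hz, hzy⟩ := hIVT (Set.mem_Icc_of_Ioo hy)
      exact ⟨z, h1 hz, hzy⟩
    have hmem : f ρ₀ ∈ Set.Ioo (f (ρ₀ - ε)) (f (ρ₀ + ε)) := by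
      constructor
      · exact hmono (h1 ⟨le_refl _, hle⟩) ⟨ha0, hb0⟩ (by linarith)
      · exact hmono ⟨ha0, hb0⟩ (h1 ⟨hle, le_refl _⟩) (by linarith)
    rw [hJ]
    exact Filter.mem_of_superset (Ioo_mem_nhds hmem.1 hmem.2) hsub
  -- ρf is strictly monotone on J
  have hρmono : StrictMonoOn ρf J := by
    intro t₁ h₁ t₂ h₂ hlt
    have e1 : f (ρf t₁) = t₁ := (hρf2 t₁ h₁).2
    have e2 : f (ρf t₂) = t₂ := (hρf2 t₂ h₂).2
    by_contra hcon
    push_neg at hcon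
    rcases eq_or_lt_of_le hcon with heq | hlt2
    · rw [← e1, ← e2, heq] at hlt
      exact lt_irrefl _ hlt
    · have h3 := hmono (hρf2 t₂ h₂).1 (hρf2 t₁ h₁).1 hlt2
      rw [e1, e2] at h3
      exact absurd hlt (not_lt.2 h3.le)
  -- ρf '' J ⊇ Ioo a b
  have himg : Set.Ioo a b ⊆ ρf '' J := by
    intro ρ hρ
    exact ⟨f ρ, by rw [hJ]; exact ⟨ρ, hρ, rfl⟩, hρf1 ρ hρ⟩
  -- continuity of ρf at points of J
  have hρcont : ∀ t ∈ J, ContinuousAt ρf t := by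
    intro t ht
    apply hρmono.continuousAt_of_image_mem_nhds (hJn t ht)
    exact Filter.mem_of_superset
      (Ioo_mem_nhds (hρf2 t ht).1.1 (hρf2 t ht).1.2) himg
  -- derivative of ρf
  have hρderiv : ∀ t ∈ J, HasDerivAt ρf (deriv f (ρf t))⁻¹ t := by
    intro t ht
    have hρt := (hρf2 t ht).1
    apply HasDerivAt.of_local_left_inverse (hρcont t ht)
      ((hd1 0 (ρf t) hρt).hasDerivAt) (ne_of_gt (hpos (ρf t) hρt))
    filter_upwards [hJn t ht] with s hs
    exact (hρf2 s hs).2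
  -- x s k as composition
  have hxk : ∀ k : Fin (n + 1), (fun s => x s k) = fun s => xt (ρf s) k := by
    intro k; funext s; exact hx s k
  -- first derivative of x
  have hD : ∀ t ∈ J, ∀ k : Fin (n + 1),
      HasDerivAt (fun s => x s k)
        (deriv (fun ρ => xt ρ k) (ρf t) * (deriv f (ρf t))⁻¹) t := by
    intro t ht k
    rw [hxk k]
    exact ((hd1 k (ρf t) (hρf2 t ht).1).hasDerivAt).comp t (hρderiv t ht)
  have hDval : ∀ t ∈ J, ∀ k : Fin (n + 1),
      deriv (fun s => x s k) t
        = deriv (fun ρ => xt ρ k) (ρf t) * (deriv f (ρf t))⁻¹ := by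
    intro t ht k
    exact (hD t ht k).deriv
  -- second derivative of x
  have hD2 : ∀ t ∈ J, ∀ k : Fin (n + 1),
      HasDerivAt (deriv (fun s => x s k))
        ((deriv (deriv (fun ρ => xt ρ k)) (ρf t) * (deriv f (ρf t))⁻¹
          + deriv (fun ρ => xt ρ k) (ρf t)
            * (-(deriv (deriv f) (ρf t)) / (deriv f (ρf t)) ^ 2))
          * (deriv f (ρf t))⁻¹) t := by
    intro t ht k
    have hρt := (hρf2 t ht).1
    have hne : deriv f (ρf t) ≠ 0 := ne_of_gt (hpos (ρf t) hρt)
    have hg : HasDerivAt (fun ρ => deriv (fun ρ => xt ρ k) ρ * (deriv f ρ)⁻¹)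
        (deriv (deriv (fun ρ => xt ρ k)) (ρf t) * (deriv f (ρf t))⁻¹
          + deriv (fun ρ => xt ρ k) (ρf t)
            * (-(deriv (deriv f) (ρf t)) / (deriv f (ρf t)) ^ 2)) (ρf t) :=
      ((hd2 k (ρf t) hρt).hasDerivAt).mul (((hd2 0 (ρf t) hρt).hasDerivAt).inv hne)
    have hcomp := hg.comp t (hρderiv t ht)
    apply hcomp.congr_of_eventuallyEq
    filter_upwards [hJn t ht] with s hs
    exact hDval s hs k
  intro t ht
  have hρt := (hρf2 t ht).1
  have hne : deriv f (ρf t) ≠ 0 := ne_of_gt (hpos (ρf t) hρt)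
  refine ⟨fun l => ⟨(hD t ht l).differentiableAt, (hD2 t ht l).differentiableAt⟩, ?_, ?_⟩
  · rw [hDval t ht 0]
    exact mul_inv_cancel₀ hne
  · intro k hk
    -- velocity rescaling
    have hv : (fun l => deriv (fun s => x s l) t)
        = (deriv f (ρf t))⁻¹ • (fun l => deriv (fun ρ => xt ρ l) (ρf t)) := by
      funext l
      rw [hDval t ht l]
      simp [mul_comm]
    have hxval : x t = xt (ρf t) := by funext l; exact hx t l
    have hγ : ∀ k' i j : Fin (n + 1),
        γ k' i j (x t) (fun l => deriv (fun s => x s l) t)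
          = γ k' i j (xt (ρf t)) (fun l => deriv (fun ρ => xt ρ l) (ρf t)) := by
      intro k' i j
      rw [hxval, hv]
      exact hγhom k' i j _ _ _ (inv_pos.2 (hpos (ρf t) hρt))
    -- sums rescale
    have hsum : ∀ k' : Fin (n + 1),
        (∑ i, ∑ j, γ k' i j (x t) (fun l => deriv (fun s => x s l) t)
            * deriv (fun s => x s i) t * deriv (fun s => x s j) t)
          = (∑ i, ∑ j, γ k' i j (xt (ρf t)) (fun l => deriv (fun ρ => xt ρ l) (ρf t))
              * deriv (fun ρ => xt ρ i) (ρf t) * deriv (fun ρ => xt ρ j) (ρf t))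
            * ((deriv f (ρf t))⁻¹ * (deriv f (ρf t))⁻¹) := by
      intro k'
      rw [Finset.sum_mul]
      refine Finset.sum_congr rfl fun i _ => ?_
      rw [Finset.sum_mul]
      refine Finset.sum_congr rfl fun j _ => ?_
      rw [hγ k' i j, hDval t ht i, hDval t ht j]
      ring
    rw [(hD2 t ht k).deriv, hsum k, hsum 0, hDval t ht k,
      hgeo k (ρf t) hρt, hgeo 0 (ρf t) hρt]
    field_simp
end

section
/- Set D := √(a²·(p·sin θ + q·cos θ)² + b²·(p·cos θ − q·sin θ)²); then D > 0, and the set of all (X, Y) ∈ ℝ² satisfying the orthogonality conditions h((X,Y) − W, (X,Y) − W) = 1 and h((X,Y) − W, (p,q)) = 0 consists of exactly the two points given by Richards' formulas: X = ±(a²·cos θ·(p·sin θ + q·cos θ) − b²·sin θ·(p·cos θ − q·sin θ))/D + w₁ and Y = ±(−a²·sin θ·(p·sin θ + q·cos θ) − b²·cos θ·(p·cos θ − q·sin θ))/D + w₂, with matching signs. -/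
set_option maxHeartbeats 1000000


/-- Richards' equations. With `h` the inner product on `ℝ²` whose unit
circle is the ellipse with semi-axes `a, b` rotated clockwise by `θ`, wind
`W = (w₁, w₂)` and tangent direction `(p, q) ≠ 0`, set
`D := √(a²(p sin θ + q cos θ)² + b²(p cos θ − q sin θ)²)`. Then `D > 0` and the
solutions `(X, Y)` of the orthogonality conditions `h((X,Y) − W, (X,Y) − W) = 1`,
`h((X,Y) − W, (p,q)) = 0` are exactly the two points of Richards' formulas
(with matching signs `±`). -/
theorem stmt_9 (a b θ w₁ w₂ p q : ℝ) (ha : 0 < a) (hb : 0 < b)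
    (hpq : (p, q) ≠ ((0 : ℝ), (0 : ℝ)))
    (h : ℝ × ℝ → ℝ × ℝ → ℝ)
    (hh : ∀ v u : ℝ × ℝ, h v u = (1 / (a ^ 2 * b ^ 2)) *
      ((a ^ 2 * Real.sin θ ^ 2 + b ^ 2 * Real.cos θ ^ 2) * v.1 * u.1
        + (a ^ 2 - b ^ 2) * Real.sin θ * Real.cos θ * (v.1 * u.2 + v.2 * u.1)
        + (a ^ 2 * Real.cos θ ^ 2 + b ^ 2 * Real.sin θ ^ 2) * v.2 * u.2))
    (D : ℝ)
    (hD : D = Real.sqrt (a ^ 2 * (p * Real.sin θ + q * Real.cos θ) ^ 2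
      + b ^ 2 * (p * Real.cos θ - q * Real.sin θ) ^ 2)) :
    0 < D ∧
    ∀ X Y : ℝ,
      (h (X - w₁, Y - w₂) (X - w₁, Y - w₂) = 1 ∧
        h (X - w₁, Y - w₂) (p, q) = 0) ↔
      ((X = (a ^ 2 * Real.cos θ * (p * Real.sin θ + q * Real.cos θ)
            - b ^ 2 * Real.sin θ * (p * Real.cos θ - q * Real.sin θ)) / D + w₁
        ∧ Y = (-(a ^ 2) * Real.sin θ * (p * Real.sin θ + q * Real.cos θ)
            - b ^ 2 * Real.cos θ * (p * Real.cos θ - q * Real.sin θ)) / D + w₂)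
      ∨ (X = -((a ^ 2 * Real.cos θ * (p * Real.sin θ + q * Real.cos θ)
            - b ^ 2 * Real.sin θ * (p * Real.cos θ - q * Real.sin θ)) / D) + w₁
        ∧ Y = -((-(a ^ 2) * Real.sin θ * (p * Real.sin θ + q * Real.cos θ)
            - b ^ 2 * Real.cos θ * (p * Real.cos θ - q * Real.sin θ)) / D) + w₂)) := by
  set s := Real.sin θ with hs
  set c := Real.cos θ with hc
  have hsc : s ^ 2 + c ^ 2 = 1 := Real.sin_sq_add_cos_sq θ
  set A := p * s + q * c with hA
  set B := p * c - q * s with hB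
  have ha' : a ≠ 0 := ha.ne'
  have hb' : b ≠ 0 := hb.ne'
  -- positivity of the radicand
  have hpq2 : 0 < p ^ 2 + q ^ 2 := by
    rcases eq_or_ne p 0 with hp | hp
    · rcases eq_or_ne q 0 with hq | hq
      · exact absurd (by rw [hp, hq]) hpq
      · positivity
    · positivity
  have hAB : A ^ 2 + B ^ 2 = p ^ 2 + q ^ 2 := by
    have : A ^ 2 + B ^ 2 = (p ^ 2 + q ^ 2) * (s ^ 2 + c ^ 2) := by ring
    rw [this, hsc, mul_one]
  have hrad : 0 < a ^ 2 * A ^ 2 + b ^ 2 * B ^ 2 := by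
    rcases eq_or_ne A 0 with hA0 | hA0
    · have hB0 : B ≠ 0 := by
        intro hB0
        rw [hA0, hB0] at hAB; simp at hAB; nlinarith
      positivity
    · positivity
  have hDpos : 0 < D := by rw [hD]; exact Real.sqrt_pos.mpr hrad
  have hDne : D ≠ 0 := hDpos.ne'
  have hD2 : D ^ 2 = a ^ 2 * A ^ 2 + b ^ 2 * B ^ 2 := by
    rw [hD, sq, Real.mul_self_sqrt hrad.le]
  refine ⟨hDpos, fun X Y => ?_⟩
  constructor
  · rintro ⟨h1, h2⟩
    rw [hh] at h1 h2
    simp only at h1 h2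
    field_simp at h1 h2
    set x := X - w₁ with hx
    set y := Y - w₂ with hy
    have E1 : a ^ 2 * (x * s + y * c) ^ 2 + b ^ 2 * (x * c - y * s) ^ 2 = a ^ 2 * b ^ 2 := by
      linear_combination h1
    have E2 : a ^ 2 * (x * s + y * c) * A + b ^ 2 * (x * c - y * s) * B = 0 := by
      linear_combination h2
    clear h1 h2
    set u := x * s + y * c with hu
    set v := x * c - y * s with hv
    have keyU : (u * D - b ^ 2 * B) * (u * D + b ^ 2 * B) = 0 := by
      have : a ^ 2 * ((u * D - b ^ 2 * B) * (u * D + b ^ 2 * B)) = 0 := by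
        linear_combination a ^ 2 * u ^ 2 * hD2 + (a ^ 2 * u * A - b ^ 2 * v * B) * E2
          + b ^ 2 * B ^ 2 * E1
      exact (mul_eq_zero.mp this).resolve_left (pow_ne_zero 2 ha')
    have keyV : (v * D - a ^ 2 * A) * (v * D + a ^ 2 * A) = 0 := by
      have : b ^ 2 * ((v * D - a ^ 2 * A) * (v * D + a ^ 2 * A)) = 0 := by
        linear_combination b ^ 2 * v ^ 2 * hD2 + (b ^ 2 * v * B - a ^ 2 * u * A) * E2
          + a ^ 2 * A ^ 2 * E1
      exact (mul_eq_zero.mp this).resolve_left (pow_ne_zero 2 hb')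
    have coup : a ^ 2 * A * (u * D) + b ^ 2 * B * (v * D) = 0 := by
      linear_combination D * E2
    have matched : (u * D = -(b ^ 2 * B) ∧ v * D = a ^ 2 * A) ∨
        (u * D = b ^ 2 * B ∧ v * D = -(a ^ 2 * A)) := by
      rcases mul_eq_zero.mp keyU with hU | hU <;>
      rcases mul_eq_zero.mp keyV with hV | hV
      · -- u*D = b²B, v*D = a²A : mismatched
        have hU' := sub_eq_zero.mp hU
        have hV' := sub_eq_zero.mp hV
        have hABz : A * B = 0 := by
          have h2' : 2 * (a ^ 2 * b ^ 2) * (A * B) = 0 := by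
            linear_combination coup - a ^ 2 * A * hU' - b ^ 2 * B * hV'
          have := mul_eq_zero.mp h2'
          rcases this with h' | h'
          · exact absurd h' (by positivity : (0:ℝ) < 2 * (a ^ 2 * b ^ 2)).ne'
          · exact h'
        rcases mul_eq_zero.mp hABz with h' | h'
        · -- A = 0: pick the branch matching hU'
          right
          exact ⟨hU', by linear_combination hV' + 2 * a ^ 2 * h'⟩
        · -- B = 0: pick the branch matching hV'
          left
          exact ⟨by linear_combination hU' + 2 * b ^ 2 * h', hV'⟩
      · right; exact ⟨sub_eq_zero.mp hU, eq_neg_of_add_eq_zero_left hV⟩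
      · left; exact ⟨eq_neg_of_add_eq_zero_left hU, sub_eq_zero.mp hV⟩
      · -- u*D = -b²B, v*D = -a²A : mismatched
        have hU' := eq_neg_of_add_eq_zero_left hU
        have hV' := eq_neg_of_add_eq_zero_left hV
        have hABz : A * B = 0 := by
          have h2' : 2 * (a ^ 2 * b ^ 2) * (A * B) = 0 := by
            linear_combination a ^ 2 * A * hU' + b ^ 2 * B * hV' - coup
          rcases mul_eq_zero.mp h2' with h' | h'
          · exact absurd h' (by positivity : (0:ℝ) < 2 * (a ^ 2 * b ^ 2)).ne'
          · exact h'
        rcases mul_eq_zero.mp hABz with h' | h'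
        · -- A = 0: pick branch matching hU'
          left
          exact ⟨hU', by linear_combination hV' - 2 * a ^ 2 * h'⟩
        · -- B = 0: pick branch matching hV'
          right
          exact ⟨by linear_combination hU' - 2 * b ^ 2 * h', hV'⟩
    rcases matched with ⟨hU, hV⟩ | ⟨hU, hV⟩
    · -- ε = -1 : first branch
      left
      have hxD : x * D = a ^ 2 * c * A - b ^ 2 * s * B := by
        linear_combination s * hU + c * hV - x * D * hsc
      have hyD : y * D = -(a ^ 2) * s * A - b ^ 2 * c * B := by
        linear_combination c * hU - s * hV - y * D * hsc
      constructor
      · have : X = (a ^ 2 * c * A - b ^ 2 * s * B) / D + w₁ := by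
          field_simp
          linear_combination hxD
        exact this
      · have : Y = (-(a ^ 2) * s * A - b ^ 2 * c * B) / D + w₂ := by
          field_simp
          linear_combination hyD
        exact this
    · -- ε = +1 : second branch
      right
      have hxD : x * D = -(a ^ 2 * c * A - b ^ 2 * s * B) := by
        linear_combination s * hU + c * hV - x * D * hsc
      have hyD : y * D = -(-(a ^ 2) * s * A - b ^ 2 * c * B) := by
        linear_combination c * hU - s * hV - y * D * hsc
      constructor
      · have : X = -((a ^ 2 * c * A - b ^ 2 * s * B) / D) + w₁ := by
          field_simp
          linear_combination hxD
        exact this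
      · have : Y = -((-(a ^ 2) * s * A - b ^ 2 * c * B) / D) + w₂ := by
          field_simp
          linear_combination hyD
        exact this
  · rintro (⟨hX, hY⟩ | ⟨hX, hY⟩) <;>
    [ (have hxD : (X - w₁) * D = a ^ 2 * c * A - b ^ 2 * s * B := by
        rw [hX]; field_simp <;> ring
       have hyD : (Y - w₂) * D = -(a ^ 2) * s * A - b ^ 2 * c * B := by
        rw [hY]; field_simp <;> ring
       have hU : ((X - w₁) * s + (Y - w₂) * c) * D = -(b ^ 2 * B) := by
        linear_combination s * hxD + c * hyD - b ^ 2 * B * hsc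
       have hV : ((X - w₁) * c - (Y - w₂) * s) * D = a ^ 2 * A := by
        linear_combination c * hxD - s * hyD + a ^ 2 * A * hsc
       have E1 : a ^ 2 * ((X - w₁) * s + (Y - w₂) * c) ^ 2
            + b ^ 2 * ((X - w₁) * c - (Y - w₂) * s) ^ 2 = a ^ 2 * b ^ 2 := by
        refine mul_right_cancel₀ (pow_ne_zero 2 hDne) ?_
        linear_combination a ^ 2 * (((X - w₁) * s + (Y - w₂) * c) * D + -(b ^ 2 * B)) * hU
          + b ^ 2 * (((X - w₁) * c - (Y - w₂) * s) * D + a ^ 2 * A) * hV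
          - a ^ 2 * b ^ 2 * hD2
       have E2 : a ^ 2 * ((X - w₁) * s + (Y - w₂) * c) * A
            + b ^ 2 * ((X - w₁) * c - (Y - w₂) * s) * B = 0 := by
        refine mul_right_cancel₀ hDne (?_ : _ = 0 * D)
        linear_combination a ^ 2 * A * hU + b ^ 2 * B * hV);
      (have hxD : (X - w₁) * D = -(a ^ 2 * c * A - b ^ 2 * s * B) := by
        rw [hX]; field_simp <;> ring
       have hyD : (Y - w₂) * D = -(-(a ^ 2) * s * A - b ^ 2 * c * B) := by
        rw [hY]; field_simp <;> ring
       have hU : ((X - w₁) * s + (Y - w₂) * c) * D = b ^ 2 * B := by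
        linear_combination s * hxD + c * hyD + b ^ 2 * B * hsc
       have hV : ((X - w₁) * c - (Y - w₂) * s) * D = -(a ^ 2 * A) := by
        linear_combination c * hxD - s * hyD - a ^ 2 * A * hsc
       have E1 : a ^ 2 * ((X - w₁) * s + (Y - w₂) * c) ^ 2
            + b ^ 2 * ((X - w₁) * c - (Y - w₂) * s) ^ 2 = a ^ 2 * b ^ 2 := by
        refine mul_right_cancel₀ (pow_ne_zero 2 hDne) ?_
        linear_combination a ^ 2 * (((X - w₁) * s + (Y - w₂) * c) * D + b ^ 2 * B) * hU
          + b ^ 2 * (((X - w₁) * c - (Y - w₂) * s) * D + -(a ^ 2 * A)) * hV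
          - a ^ 2 * b ^ 2 * hD2
       have E2 : a ^ 2 * ((X - w₁) * s + (Y - w₂) * c) * A
            + b ^ 2 * ((X - w₁) * c - (Y - w₂) * s) * B = 0 := by
        refine mul_right_cancel₀ hDne (?_ : _ = 0 * D)
        linear_combination a ^ 2 * A * hU + b ^ 2 * B * hV)] <;>
    · constructor
      · rw [hh]; simp only; field_simp; linear_combination E1
      · rw [hh]; simp only; field_simp; linear_combination E2
end

section
/- Suppose h(v,W) > 0 and h(v,W)² > (h(W,W) − 1)·h(v,v). Then v ≠ 0 and the equation h(v − sW, v − sW) = s² has exactly two real solutions in s, both strictly positive, namely s_± = (h(v,W) ± √(h(v,W)² − (h(W,W) − 1)·h(v,v)))/(h(W,W) − 1); consequently the conic Finsler value F(v) := s_− and the Lorentzian Finsler value F_l(v) := s_+ of the wind Finslerian structure satisfy 0 < F(v) < F_l(v). -/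
/-- Strong wind (`h(W,W) > 1`). If `h(v,W) > 0` and
`h(v,W)² > (h(W,W) − 1)h(v,v)`, then `v ≠ 0` and `h(v − sW, v − sW) = s²` has exactly
two real solutions, both positive, namely `s± = (h(v,W) ± √disc)/(h(W,W) − 1)`; so the
conic Finsler value `F(v) = sMinus` and the Lorentzian Finsler value `F_l(v) = sPlus` satisfy
`0 < F(v) < F_l(v)`. -/
theorem stmt_10 {V : Type*} [AddCommGroup V] [Module ℝ V] [FiniteDimensional ℝ V]
    (h : V →ₗ[ℝ] V →ₗ[ℝ] ℝ)
    (hsymm : ∀ x y : V, h x y = h y x)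
    (hposdef : ∀ x : V, x ≠ 0 → 0 < h x x)
    (W : V) (hW : 1 < h W W)
    (v : V) (hvW : 0 < h v W)
    (hdisc : (h W W - 1) * h v v < (h v W) ^ 2)
    (sMinus sPlus : ℝ)
    (hsMinus : sMinus = (h v W - Real.sqrt ((h v W) ^ 2 - (h W W - 1) * h v v))
      / (h W W - 1))
    (hsPlus : sPlus = (h v W + Real.sqrt ((h v W) ^ 2 - (h W W - 1) * h v v))
      / (h W W - 1)) :
    v ≠ 0 ∧ 0 < sMinus ∧ sMinus < sPlus ∧
    h (v - sMinus • W) (v - sMinus • W) = sMinus ^ 2 ∧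
    h (v - sPlus • W) (v - sPlus • W) = sPlus ^ 2 ∧
    (∀ s : ℝ, h (v - s • W) (v - s • W) = s ^ 2 → s = sMinus ∨ s = sPlus) := by
  have ha : 0 < h W W - 1 := by linarith
  have hv0 : v ≠ 0 := by
    intro hv; rw [hv] at hvW; simp at hvW
  have hvv : 0 < h v v := hposdef v hv0
  have hD : 0 < (h v W) ^ 2 - (h W W - 1) * h v v := by linarith
  set D := (h v W) ^ 2 - (h W W - 1) * h v v with hDdef
  have hsq : Real.sqrt D ^ 2 = D := Real.sq_sqrt hD.le
  have hsqpos : 0 < Real.sqrt D := Real.sqrt_pos.mpr hD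
  have hsqlt : Real.sqrt D < h v W := by
    nlinarith [hsq, Real.sqrt_nonneg D]
  have hexp : ∀ s : ℝ, h (v - s • W) (v - s • W)
      = h v v - 2 * s * h v W + s ^ 2 * h W W := by
    intro s
    simp only [map_sub, map_smul, LinearMap.sub_apply, LinearMap.smul_apply, smul_eq_mul]
    rw [hsymm W v]; ring
  have haNe : h W W - 1 ≠ 0 := ne_of_gt ha
  have hm : (h W W - 1) * sMinus = h v W - Real.sqrt D := by
    rw [hsMinus]; field_simp
  have hp : (h W W - 1) * sPlus = h v W + Real.sqrt D := by
    rw [hsPlus]; field_simp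
  have e1 : (h W W - 1) * (sMinus + sPlus) = 2 * h v W := by linarith
  have e2 : (h W W - 1) * ((h W W - 1) * (sMinus * sPlus)) = (h W W - 1) * h v v := by
    linear_combination ((h W W - 1) * sPlus) * hm + (h v W - Real.sqrt D) * hp - hsq
  have e2' : (h W W - 1) * (sMinus * sPlus) = h v v := mul_left_cancel₀ haNe e2
  refine ⟨hv0, ?_, ?_, ?_, ?_, ?_⟩
  · rw [hsMinus]; exact div_pos (by linarith) ha
  · rw [hsMinus, hsPlus, div_lt_div_iff₀ ha ha]; nlinarith
  · rw [hexp]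
    have r1 : (h W W - 1) * (h v v - 2 * sMinus * h v W + sMinus ^ 2 * h W W - sMinus ^ 2)
        = (h W W - 1) * 0 := by
      linear_combination ((h W W - 1) * sMinus - (h v W + Real.sqrt D)) * hm + hsq + hDdef
    have := mul_left_cancel₀ haNe r1
    linarith
  · rw [hexp]
    have r2 : (h W W - 1) * (h v v - 2 * sPlus * h v W + sPlus ^ 2 * h W W - sPlus ^ 2)
        = (h W W - 1) * 0 := by
      linear_combination ((h W W - 1) * sPlus - (h v W - Real.sqrt D)) * hp + hsq + hDdef
    have := mul_left_cancel₀ haNe r2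
    linarith
  · intro s hs
    rw [hexp] at hs
    have hfac : (h W W - 1) * ((s - sMinus) * (s - sPlus)) = 0 := by
      linear_combination hs - s * e1 + e2'
    rcases mul_eq_zero.mp hfac with h1 | h2
    · exact absurd h1 haNe
    · rcases mul_eq_zero.mp h2 with h3 | h4
      · left; linarith
      · right; linarith
end
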